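/- The Heisenberg-type group G over ℤ_p and ℚ_p contains no non-trivial discrete subgroup: for every element A ≠ e of G, the sequence A^{p^n} converges to the identity, so ⟨A⟩ is not discrete. -/

import Mathlib

/-- The Heisenberg-type group of upper unitriangular 3×3 matrices
`[[1, b, a], [0, 1, c], [0, 0, 1]]` with `a ∈ ℚ_p` and `b, c ∈ ℤ_p`,
recorded by its three free entries. -/
@[ext]
structure Heis (p : ℕ) [Fact p.Prime] where
  a : ℚ_[p]
  b : ℤ_[p]
  c : ℤ_[p]

namespace Heis

variable {p : ℕ} [Fact p.Prime]

/-- Matrix multiplication, in terms of the entries. -/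
noncomputable instance : Mul (Heis p) :=
  ⟨fun x y => ⟨x.a + y.a + (x.b : ℚ_[p]) * (y.c : ℚ_[p]), x.b + y.b, x.c + y.c⟩⟩

noncomputable instance : One (Heis p) := ⟨⟨0, 0, 0⟩⟩

noncomputable instance : Inv (Heis p) :=
  ⟨fun x => ⟨-x.a + (x.b : ℚ_[p]) * (x.c : ℚ_[p]), -x.b, -x.c⟩⟩

@[simp] theorem mul_a (x y : Heis p) :
    (x * y).a = x.a + y.a + (x.b : ℚ_[p]) * (y.c : ℚ_[p]) := rfl
@[simp] theorem mul_b (x y : Heis p) : (x * y).b = x.b + y.b := rfl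
@[simp] theorem mul_c (x y : Heis p) : (x * y).c = x.c + y.c := rfl
@[simp] theorem one_a : (1 : Heis p).a = 0 := rfl
@[simp] theorem one_b : (1 : Heis p).b = 0 := rfl
@[simp] theorem one_c : (1 : Heis p).c = 0 := rfl
@[simp] theorem inv_a (x : Heis p) :
    x⁻¹.a = -x.a + (x.b : ℚ_[p]) * (x.c : ℚ_[p]) := rfl
@[simp] theorem inv_b (x : Heis p) : x⁻¹.b = -x.b := rfl
@[simp] theorem inv_c (x : Heis p) : x⁻¹.c = -x.c := rfl

noncomputable instance : Group (Heis p) :=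
  Group.ofLeftAxioms
    (fun x y z => by ext <;> simp <;> push_cast <;> ring)
    (fun x => by ext <;> simp)
    (fun x => by ext <;> simp <;> push_cast <;> ring)

/-- The topology inherited from `ℚ_p × ℤ_p × ℤ_p` (equivalently from `ℚ_p³`). -/
noncomputable instance : TopologicalSpace (Heis p) :=
  TopologicalSpace.induced (fun x : Heis p => (x.a, x.b, x.c)) inferInstance

end Heis

section Aux
variable {p : ℕ} [Fact p.Prime]

namespace Heis

theorem pow_b (A : Heis p) (n : ℕ) : (A ^ n).b = (n : ℤ_[p]) * A.b := by
  induction n with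
  | zero => simp [pow_zero]
  | succ n ih => rw [pow_succ]; simp [ih]; push_cast; ring

theorem pow_c (A : Heis p) (n : ℕ) : (A ^ n).c = (n : ℤ_[p]) * A.c := by
  induction n with
  | zero => simp [pow_zero]
  | succ n ih => rw [pow_succ]; simp [ih]; push_cast; ring

theorem pow_a (A : Heis p) (n : ℕ) :
    (A ^ n).a = (n : ℚ_[p]) * A.a + (n.choose 2 : ℚ_[p]) * A.b * A.c := by
  induction n with
  | zero => simp [pow_zero]
  | succ n ih =>
    rw [pow_succ]
    simp only [mul_a, ih, pow_b, Nat.choose_succ_succ, Nat.choose_one_right]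
    push_cast
    ring

theorem torsion_free (A : Heis p) {n : ℕ} (hn : n ≠ 0) (h : A ^ n = 1) : A = 1 := by
  have hb : (A ^ n).b = 0 := by rw [h]; simp
  have hc : (A ^ n).c = 0 := by rw [h]; simp
  have ha : (A ^ n).a = 0 := by rw [h]; simp
  rw [pow_b] at hb
  rw [pow_c] at hc
  have hn' : (n : ℤ_[p]) ≠ 0 := Nat.cast_ne_zero.mpr hn
  have hb0 : A.b = 0 := by
    rcases mul_eq_zero.mp hb with h' | h'
    · exact absurd h' hn'
    · exact h'
  have hc0 : A.c = 0 := by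
    rcases mul_eq_zero.mp hc with h' | h'
    · exact absurd h' hn'
    · exact h'
  rw [pow_a, hb0, hc0] at ha
  simp at ha
  have ha0 : A.a = 0 := by
    rcases ha with h' | h'
    · exact absurd (Nat.cast_injective h' : n = 0) hn
    · exact h'
  ext <;> simp [ha0, hb0, hc0]

end Heis

end Aux


/-- In the Heisenberg-type group over `ℚ_p`, `ℤ_p`, for every element `A` the
sequence `A ^ (p ^ n)` converges to the identity; consequently every non-trivial
subgroup is non-discrete, i.e. the group contains no non-trivial discrete
subgroup. -/
theorem stmt_18 (p : ℕ) [Fact p.Prime] :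
    (∀ A : Heis p,
      Filter.Tendsto (fun n : ℕ => A ^ (p ^ n)) Filter.atTop (nhds 1)) ∧
    ∀ H : Subgroup (Heis p), H ≠ ⊥ → ¬ DiscreteTopology H := by
  have hp : p.Prime := Fact.out
  have key : ∀ A : Heis p,
      Filter.Tendsto (fun n : ℕ => A ^ (p ^ n)) Filter.atTop (nhds 1) := by
    intro A
    rw [nhds_induced, Filter.tendsto_comap_iff]
    have hQ : ‖((p : ℚ_[p]))‖ < 1 := by
      rw [Padic.norm_p]
      exact inv_lt_one_of_one_lt₀ (by exact_mod_cast hp.one_lt)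
    have hZ : ‖((p : ℤ_[p]))‖ < 1 := by
      rw [PadicInt.norm_p]
      exact inv_lt_one_of_one_lt₀ (by exact_mod_cast hp.one_lt)
    have tQ : Filter.Tendsto (fun n : ℕ => (p : ℚ_[p]) ^ n) Filter.atTop (nhds 0) :=
      tendsto_pow_atTop_nhds_zero_of_norm_lt_one hQ
    have tZ : Filter.Tendsto (fun n : ℕ => (p : ℤ_[p]) ^ n) Filter.atTop (nhds 0) :=
      tendsto_pow_atTop_nhds_zero_of_norm_lt_one hZ
    have ta : Filter.Tendsto (fun n : ℕ => (A ^ p ^ n).a) Filter.atTop (nhds 0) := by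
      have : ∀ n : ℕ, (A ^ p ^ n).a =
          (p : ℚ_[p]) ^ n * A.a +
            ((p : ℚ_[p]) ^ n * ((p : ℚ_[p]) ^ n - 1) / 2) * A.b * A.c := by
        intro n
        rw [Heis.pow_a, Nat.cast_choose_two]
        push_cast
        ring
      simp only [this]
      have h1 : Filter.Tendsto (fun n : ℕ => (p : ℚ_[p]) ^ n * A.a)
          Filter.atTop (nhds 0) := by simpa using tQ.mul_const A.a
      have h2 : Filter.Tendsto
          (fun n : ℕ => ((p : ℚ_[p]) ^ n * ((p : ℚ_[p]) ^ n - 1) / 2) * A.b * A.c)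
          Filter.atTop (nhds 0) := by
        have := (((tQ.mul (tQ.sub_const 1)).div_const 2).mul_const
          (A.b : ℚ_[p])).mul_const (A.c : ℚ_[p])
        simpa using this
      simpa using h1.add h2
    have tb : Filter.Tendsto (fun n : ℕ => (A ^ p ^ n).b) Filter.atTop (nhds 0) := by
      have : ∀ n : ℕ, (A ^ p ^ n).b = (p : ℤ_[p]) ^ n * A.b := by
        intro n; rw [Heis.pow_b]; push_cast; ring
      simp only [this]
      simpa using tZ.mul_const A.b
    have tc : Filter.Tendsto (fun n : ℕ => (A ^ p ^ n).c) Filter.atTop (nhds 0) := by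
      have : ∀ n : ℕ, (A ^ p ^ n).c = (p : ℤ_[p]) ^ n * A.c := by
        intro n; rw [Heis.pow_c]; push_cast; ring
      simp only [this]
      simpa using tZ.mul_const A.c
    have h3 : Filter.Tendsto (fun n : ℕ => ((A ^ p ^ n).a, (A ^ p ^ n).b, (A ^ p ^ n).c))
        Filter.atTop (nhds ((0 : ℚ_[p]), (0 : ℤ_[p]), (0 : ℤ_[p]))) :=
      ta.prodMk_nhds (tb.prodMk_nhds tc)
    exact h3
  refine ⟨key, ?_⟩
  intro H hH hdisc
  obtain ⟨⟨A, hAH⟩, hA1⟩ := Subgroup.ne_bot_iff_exists_ne_one.mp hH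
  have hA : A ≠ 1 := fun h => hA1 (by simp [Subtype.ext_iff, h])
  have tend : Filter.Tendsto (fun n : ℕ => (⟨A ^ p ^ n, pow_mem hAH _⟩ : H))
      Filter.atTop (nhds 1) := by
    rw [tendsto_subtype_rng]
    exact key A
  rw [nhds_discrete, Filter.tendsto_pure] at tend
  obtain ⟨n, hn⟩ := tend.exists
  have : A ^ p ^ n = 1 := congrArg Subtype.val hn
  exact hA (Heis.torsion_free A (pow_ne_zero n hp.ne_zero) this)
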